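/- If P(Y=1, Z=1 | X=1) + P(Y=0, Z=0 | X=0) > 1, then the event {ω ∈ Ω : Y1(ω)=1, Y0(ω)=0, Z1(ω)=1, Z0(ω)=0} has positive μ-measure (in particular it is nonempty), i.e. the treatment has an individual level pleiotropic effect that is causative for both Y and Z. -/

import Mathlib

open MeasureTheory ProbabilityTheory
open scoped ENNReal

/-- Conditional probability `P(A | B) = mu(A ∩ B) / mu(B)` as a real number. -/
noncomputable def condP {Ω : Type*} [MeasurableSpace Ω] (μ : Measure Ω)
    (A B : Set Ω) : ℝ :=
  (μ (A ∩ B)).toReal / (μ B).toReal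

theorem statement12
    {Ω : Type*} [MeasurableSpace Ω] (μ : Measure Ω) [IsProbabilityMeasure μ]
    (Y1 Y0 Z1 Z0 X Y Z : Ω → ℕ)
    (hY1meas : Measurable Y1) (hY0meas : Measurable Y0)
    (hZ1meas : Measurable Z1) (hZ0meas : Measurable Z0)
    (hXmeas : Measurable X)
    (hY1bin : ∀ ω, Y1 ω ≤ 1) (hY0bin : ∀ ω, Y0 ω ≤ 1)
    (hZ1bin : ∀ ω, Z1 ω ≤ 1) (hZ0bin : ∀ ω, Z0 ω ≤ 1)
    (hXbin : ∀ ω, X ω ≤ 1)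
    (hXpos : 0 < μ {ω | X ω = 1}) (hXlt : μ {ω | X ω = 1} < 1)
    (hindep : IndepFun X (fun ω => (Y1 ω, Y0 ω, Z1 ω, Z0 ω)) μ)
    (hYcons1 : ∀ ω, X ω = 1 → Y ω = Y1 ω)
    (hYcons0 : ∀ ω, X ω = 0 → Y ω = Y0 ω)
    (hZcons1 : ∀ ω, X ω = 1 → Z ω = Z1 ω)
    (hZcons0 : ∀ ω, X ω = 0 → Z ω = Z0 ω)
    (hemp : condP μ {ω | Y ω = 1 ∧ Z ω = 1} {ω | X ω = 1}
        + condP μ {ω | Y ω = 0 ∧ Z ω = 0} {ω | X ω = 0} > 1) :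
    0 < μ {ω | Y1 ω = 1 ∧ Y0 ω = 0 ∧ Z1 ω = 1 ∧ Z0 ω = 0} ∧
      {ω | Y1 ω = 1 ∧ Y0 ω = 0 ∧ Z1 ω = 1 ∧ Z0 ω = 0}.Nonempty := by
  set T : Ω → ℕ × ℕ × ℕ × ℕ := fun ω => (Y1 ω, Y0 ω, Z1 ω, Z0 ω) with hT
  set A : Set Ω := {ω | Y1 ω = 1 ∧ Z1 ω = 1} with hA
  set B : Set Ω := {ω | Y0 ω = 0 ∧ Z0 ω = 0} with hB
  -- measurability of A and B
  have hAmeas : MeasurableSet A := by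
    have : A = Y1 ⁻¹' {1} ∩ Z1 ⁻¹' {1} := by ext ω; simp [hA, Set.mem_setOf_eq]
    rw [this]
    exact (hY1meas (measurableSet_singleton 1)).inter (hZ1meas (measurableSet_singleton 1))
  have hBmeas : MeasurableSet B := by
    have : B = Y0 ⁻¹' {0} ∩ Z0 ⁻¹' {0} := by ext ω; simp [hB, Set.mem_setOf_eq]
    rw [this]
    exact (hY0meas (measurableSet_singleton 0)).inter (hZ0meas (measurableSet_singleton 0))
  -- sets in the product space
  have hs1 : MeasurableSet {p : ℕ × ℕ × ℕ × ℕ | p.1 = 1 ∧ p.2.2.1 = 1} := by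
    have : {p : ℕ × ℕ × ℕ × ℕ | p.1 = 1 ∧ p.2.2.1 = 1}
        = (Prod.fst ⁻¹' {1}) ∩ ((fun p : ℕ × ℕ × ℕ × ℕ => p.2.2.1) ⁻¹' {1}) := by
      ext p; simp [Set.mem_setOf_eq]
    rw [this]
    exact (measurable_fst (measurableSet_singleton 1)).inter
      ((measurable_fst.comp (measurable_snd.comp measurable_snd)) (measurableSet_singleton 1))
  have hs0 : MeasurableSet {p : ℕ × ℕ × ℕ × ℕ | p.2.1 = 0 ∧ p.2.2.2 = 0} := by
    have : {p : ℕ × ℕ × ℕ × ℕ | p.2.1 = 0 ∧ p.2.2.2 = 0}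
        = ((fun p : ℕ × ℕ × ℕ × ℕ => p.2.1) ⁻¹' {0})
          ∩ ((fun p : ℕ × ℕ × ℕ × ℕ => p.2.2.2) ⁻¹' {0}) := by
      ext p; simp [Set.mem_setOf_eq]
    rw [this]
    exact ((measurable_fst.comp measurable_snd) (measurableSet_singleton 0)).inter
      ((measurable_snd.comp (measurable_snd.comp measurable_snd)) (measurableSet_singleton 0))
  have hApre : A = T ⁻¹' {p : ℕ × ℕ × ℕ × ℕ | p.1 = 1 ∧ p.2.2.1 = 1} := by
    ext ω; simp [hA, hT, Set.mem_setOf_eq]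
  have hBpre : B = T ⁻¹' {p : ℕ × ℕ × ℕ × ℕ | p.2.1 = 0 ∧ p.2.2.2 = 0} := by
    ext ω; simp [hB, hT, Set.mem_setOf_eq]
  have hX1pre : {ω | X ω = 1} = X ⁻¹' {1} := rfl
  have hX0pre : {ω | X ω = 0} = X ⁻¹' {0} := rfl
  -- independence factorizations
  have hind1 : μ (X ⁻¹' {1} ∩ A) = μ (X ⁻¹' {1}) * μ A := by
    rw [hApre]
    exact hindep.measure_inter_preimage_eq_mul _ _ (measurableSet_singleton 1) hs1
  have hind0 : μ (X ⁻¹' {0} ∩ B) = μ (X ⁻¹' {0}) * μ B := by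
    rw [hBpre]
    exact hindep.measure_inter_preimage_eq_mul _ _ (measurableSet_singleton 0) hs0
  -- X=0 has positive measure
  have hXcompl : {ω | X ω = 0} = {ω | X ω = 1}ᶜ := by
    ext ω
    simp only [Set.mem_setOf_eq, Set.mem_compl_iff]
    have := hXbin ω
    omega
  have hX1meas : MeasurableSet {ω | X ω = 1} := hXmeas (measurableSet_singleton 1)
  have hX0measv : MeasurableSet {ω | X ω = 0} := hXmeas (measurableSet_singleton 0)
  have hμX0 : μ {ω | X ω = 0} = 1 - μ {ω | X ω = 1} := by
    rw [hXcompl, measure_compl hX1meas (measure_ne_top μ _), measure_univ]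
  have hX0pos : 0 < μ {ω | X ω = 0} := by
    rw [hμX0]
    exact tsub_pos_of_lt hXlt
  -- consistency: rewrite observed events on {X = x}
  have hcons1 : {ω | Y ω = 1 ∧ Z ω = 1} ∩ {ω | X ω = 1} = A ∩ {ω | X ω = 1} := by
    ext ω
    simp only [Set.mem_inter_iff, Set.mem_setOf_eq, hA]
    constructor
    · rintro ⟨⟨hy, hz⟩, hx⟩
      exact ⟨⟨by rw [← hYcons1 ω hx]; exact hy, by rw [← hZcons1 ω hx]; exact hz⟩, hx⟩
    · rintro ⟨⟨hy, hz⟩, hx⟩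
      exact ⟨⟨by rw [hYcons1 ω hx]; exact hy, by rw [hZcons1 ω hx]; exact hz⟩, hx⟩
  have hcons0 : {ω | Y ω = 0 ∧ Z ω = 0} ∩ {ω | X ω = 0} = B ∩ {ω | X ω = 0} := by
    ext ω
    simp only [Set.mem_inter_iff, Set.mem_setOf_eq, hB]
    constructor
    · rintro ⟨⟨hy, hz⟩, hx⟩
      exact ⟨⟨by rw [← hYcons0 ω hx]; exact hy, by rw [← hZcons0 ω hx]; exact hz⟩, hx⟩
    · rintro ⟨⟨hy, hz⟩, hx⟩
      exact ⟨⟨by rw [hYcons0 ω hx]; exact hy, by rw [hZcons0 ω hx]; exact hz⟩, hx⟩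
  -- compute the conditional probabilities
  have hX1ne : (μ {ω | X ω = 1}).toReal ≠ 0 := by
    have := ENNReal.toReal_pos hXpos.ne' (measure_ne_top μ _)
    exact this.ne'
  have hX0ne : (μ {ω | X ω = 0}).toReal ≠ 0 := by
    have := ENNReal.toReal_pos hX0pos.ne' (measure_ne_top μ _)
    exact this.ne'
  have hc1 : condP μ {ω | Y ω = 1 ∧ Z ω = 1} {ω | X ω = 1} = (μ A).toReal := by
    have key1 : μ ({ω | X ω = 1} ∩ A) = μ {ω | X ω = 1} * μ A := hind1
    unfold condP
    rw [hcons1, Set.inter_comm, key1, ENNReal.toReal_mul, mul_comm, mul_div_assoc,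
      div_self hX1ne, mul_one]
  have hc0 : condP μ {ω | Y ω = 0 ∧ Z ω = 0} {ω | X ω = 0} = (μ B).toReal := by
    have key0 : μ ({ω | X ω = 0} ∩ B) = μ {ω | X ω = 0} * μ B := hind0
    unfold condP
    rw [hcons0, Set.inter_comm, key0, ENNReal.toReal_mul, mul_comm, mul_div_assoc,
      div_self hX0ne, mul_one]
  rw [hc1, hc0] at hemp
  -- intersection is the target set
  have hAB : A ∩ B = {ω | Y1 ω = 1 ∧ Y0 ω = 0 ∧ Z1 ω = 1 ∧ Z0 ω = 0} := by
    ext ω; simp only [Set.mem_inter_iff, Set.mem_setOf_eq, hA, hB]; tauto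
  -- measure arithmetic
  have hsum := measure_union_add_inter A hBmeas (μ := μ)
  have hle : μ A + μ B ≤ 1 + μ (A ∩ B) := by
    rw [← hsum]
    exact add_le_add (prob_le_one (μ := μ)) le_rfl
  have hler : (μ A).toReal + (μ B).toReal ≤ 1 + (μ (A ∩ B)).toReal := by
    have h1 : ((μ A + μ B)).toReal = (μ A).toReal + (μ B).toReal :=
      ENNReal.toReal_add (measure_ne_top μ _) (measure_ne_top μ _)
    have h2 : ((1 + μ (A ∩ B)) : ℝ≥0∞).toReal = 1 + (μ (A ∩ B)).toReal := by
      rw [ENNReal.toReal_add (by norm_num) (measure_ne_top μ _)]; simp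
    calc (μ A).toReal + (μ B).toReal = ((μ A + μ B)).toReal := h1.symm
      _ ≤ ((1 + μ (A ∩ B)) : ℝ≥0∞).toReal :=
          ENNReal.toReal_mono (by finiteness) hle
      _ = 1 + (μ (A ∩ B)).toReal := h2
  have hpos : 0 < (μ (A ∩ B)).toReal := by linarith
  have hpos' : 0 < μ (A ∩ B) := by
    by_contra h
    push_neg at h
    have : μ (A ∩ B) = 0 := le_antisymm h (zero_le)
    rw [this] at hpos; simp at hpos
  rw [hAB] at hpos'
  refine ⟨hpos', MeasureTheory.nonempty_of_measure_ne_zero hpos'.ne'⟩
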